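/- Under the assumptions |x_i − y_i| ≤ R_i and |x_i − y_j| ≥ 7|x_i − x_j|/8 for j ≠ i, where R_i = (min_j |γ_j^c| · min_{j≠i} |x_i − x_j|) / (8(N−1) max_j(|γ_j^c|, |γ_j|)), one has |γ_i^c| / |x_i − y_i| ≥ (56/15) Σ_{j≠i} (|γ_j| / |x_i − x_j| + |γ_j^c| / |x_i − y_j|). -/

import Mathlib

noncomputable section

abbrev E2 := EuclideanSpace ℝ (Fin 2)

/-- Rotation of a planar vector by π/2. -/
def perp (w : E2) : E2 := (WithLp.equiv 2 (Fin 2 → ℝ)).symm ![-w 1, w 0]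

open Finset in
theorem stmt_5 (N : ℕ) (hN : 2 ≤ N) (x y : Fin N → E2) (hx : Function.Injective x)
    (γ γc : Fin N → ℝ) (hγ : ∀ j, γ j ≠ 0) (hγc : ∀ j, γc j ≠ 0)
    (i : Fin N)
    (hne : Finset.univ.Nonempty (α := Fin N))
    (hne' : (Finset.univ.erase i).Nonempty)
    (hyi : y i ≠ x i)
    (R : ℝ)
    (hR : R = ((Finset.univ.inf' hne fun j => |γc j|) *
        ((Finset.univ.erase i).inf' hne' fun j => ‖x i - x j‖)) /
        (8 * (N - 1 : ℝ) * (Finset.univ.sup' hne fun j => max |γc j| |γ j|)))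
    (h1 : ‖x i - y i‖ ≤ R)
    (h2 : ∀ j ∈ Finset.univ.erase i, ‖x i - y j‖ ≥ 7 / 8 * ‖x i - x j‖) :
    |γc i| / ‖x i - y i‖ ≥
      56 / 15 * ∑ j ∈ Finset.univ.erase i,
        (|γ j| / ‖x i - x j‖ + |γc j| / ‖x i - y j‖) := by
  classical
  set m := (Finset.univ.inf' hne fun j => |γc j|) with hmdef
  set d := ((Finset.univ.erase i).inf' hne' fun j => ‖x i - x j‖) with hddef
  set Mx := (Finset.univ.sup' hne fun j => max |γc j| |γ j|) with hMdef
  have hm0 : 0 < m := by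
    rw [hmdef, Finset.lt_inf'_iff]
    exact fun j _ => abs_pos.mpr (hγc j)
  have hd0 : 0 < d := by
    rw [hddef, Finset.lt_inf'_iff]
    intro j hj
    have hxij : x i ≠ x j := fun h => (Finset.mem_erase.mp hj).1 (hx h).symm
    simpa [norm_pos_iff, sub_ne_zero] using hxij
  have hM0 : 0 < Mx :=
    lt_of_lt_of_le (abs_pos.mpr (hγc i))
      (le_trans (le_max_left _ _) (Finset.le_sup' (fun j => max |γc j| |γ j|) (Finset.mem_univ i)))
  have hMγ : ∀ j, |γ j| ≤ Mx := fun j =>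
    le_trans (le_max_right _ _) (Finset.le_sup' (fun j => max |γc j| |γ j|) (Finset.mem_univ j))
  have hMγc : ∀ j, |γc j| ≤ Mx := fun j =>
    le_trans (le_max_left _ _) (Finset.le_sup' (fun j => max |γc j| |γ j|) (Finset.mem_univ j))
  have hdle : ∀ j ∈ Finset.univ.erase i, d ≤ ‖x i - x j‖ := fun j hj =>
    Finset.inf'_le _ hj
  have hN2 : (2:ℝ) ≤ (N:ℝ) := by exact_mod_cast hN
  have hN1' : (0:ℝ) < (N:ℝ) - 1 := by linarith
  have hyi0 : 0 < ‖x i - y i‖ := by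
    rw [norm_pos_iff, sub_ne_zero]; exact fun h => hyi h.symm
  have hR0 : 0 < R := lt_of_lt_of_le hyi0 h1
  have hL : m / R ≤ |γc i| / ‖x i - y i‖ :=
    div_le_div₀ (abs_nonneg _) (Finset.inf'_le _ (Finset.mem_univ i)) hyi0 h1
  have hmR : m / R = 8 * ((N:ℝ) - 1) * Mx / d := by
    rw [hR]
    rw [div_div_eq_mul_div, div_eq_div_iff (by positivity) hd0.ne']
    ring
  have hterm : ∀ j ∈ Finset.univ.erase i,
      |γ j| / ‖x i - x j‖ + |γc j| / ‖x i - y j‖ ≤ 15 * Mx / (7 * d) := by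
    intro j hj
    have hdj := hdle j hj
    have h2j := h2 j hj
    have hyj : 7 / 8 * d ≤ ‖x i - y j‖ := le_trans (by linarith) h2j
    have ht1 : |γ j| / ‖x i - x j‖ ≤ Mx / d := div_le_div₀ hM0.le (hMγ j) hd0 hdj
    have ht2 : |γc j| / ‖x i - y j‖ ≤ Mx / (7 / 8 * d) :=
      div_le_div₀ hM0.le (hMγc j) (by linarith) hyj
    have heq : Mx / d + Mx / (7 / 8 * d) = 15 * Mx / (7 * d) := by
      field_simp; ring
    linarith
  have hcard : ((Finset.univ.erase i).card : ℝ) = (N:ℝ) - 1 := by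
    rw [Finset.card_erase_of_mem (Finset.mem_univ i), Finset.card_univ, Fintype.card_fin]
    have h1N : 1 ≤ N := by omega
    push_cast [Nat.cast_sub h1N]
    ring
  have hsum : ∑ j ∈ Finset.univ.erase i,
      (|γ j| / ‖x i - x j‖ + |γc j| / ‖x i - y j‖) ≤ ((N:ℝ) - 1) * (15 * Mx / (7 * d)) := by
    calc ∑ j ∈ Finset.univ.erase i, (|γ j| / ‖x i - x j‖ + |γc j| / ‖x i - y j‖)
        ≤ ((Finset.univ.erase i).card : ℝ) * (15 * Mx / (7 * d)) := by
          simpa [nsmul_eq_mul] using Finset.sum_le_card_nsmul _ _ _ hterm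
      _ = ((N:ℝ) - 1) * (15 * Mx / (7 * d)) := by rw [hcard]
  have hfinal : 56 / 15 * (((N:ℝ) - 1) * (15 * Mx / (7 * d))) = 8 * ((N:ℝ) - 1) * Mx / d := by
    field_simp; ring
  calc |γc i| / ‖x i - y i‖ ≥ m / R := hL
    _ = 8 * ((N:ℝ) - 1) * Mx / d := hmR
    _ = 56 / 15 * (((N:ℝ) - 1) * (15 * Mx / (7 * d))) := hfinal.symm
    _ ≥ 56 / 15 * ∑ j ∈ Finset.univ.erase i,
        (|γ j| / ‖x i - x j‖ + |γc j| / ‖x i - y j‖) := by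
        exact mul_le_mul_of_nonneg_left hsum (by norm_num)
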